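/- Let q be an odd prime with q − 1 = 2m + 4 (so h = 2 in the notation above). Then the polynomial Ψ_Γ(z) = Σ_{l=1}^{q−1} ∏_{j=1}^2 (z − ξ^{s̄_j l})(z − ξ^{−s̄_j l}) is independent of the choice of the pair (s̄₁, s̄₂): its coefficients are determined by q alone (a₀ = a₄ = q−1, a₁ = a₃ = 2m, a₂ = m(q−2m+1) up to sign conventions). -/
import Mathlib

open Polynomial Finset

lemma sum_zpow_eq_neg_one {q : ℕ} (hq : 1 < q) {ξ : ℂ}
    (hprim : IsPrimitiveRoot ξ q) {k : ℤ} (hk : ¬ (q : ℤ) ∣ k) :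
    ∑ l ∈ Finset.Icc 1 (q - 1), ξ ^ (k * l) = -1 := by
  have hx1 : ξ ^ k ≠ 1 := fun h => hk ((hprim.zpow_eq_one_iff_dvd k).mp h)
  have hxq : (ξ ^ k) ^ q = 1 := by
    rw [← zpow_natCast (ξ ^ k) q, ← zpow_mul, mul_comm, zpow_mul, zpow_natCast,
      hprim.pow_eq_one, one_zpow]
  have hgeom : ∑ l ∈ Finset.range q, (ξ ^ k) ^ l = 0 := by
    rw [geom_sum_eq hx1 q, hxq, sub_self, zero_div]
  have hins : Finset.range q = insert 0 (Finset.Icc 1 (q - 1)) := by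
    ext x; simp only [Finset.mem_range, Finset.mem_insert, Finset.mem_Icc]; omega
  rw [hins, Finset.sum_insert (by simp)] at hgeom
  have h2 : ∑ l ∈ Finset.Icc 1 (q - 1), ξ ^ (k * l) =
      ∑ l ∈ Finset.Icc 1 (q - 1), (ξ ^ k) ^ l := by
    refine Finset.sum_congr rfl fun l _ => ?_
    rw [← zpow_natCast (ξ ^ k) l, ← zpow_mul]
  rw [h2]
  simp only [pow_zero] at hgeom
  linear_combination hgeom

lemma psi_sum_eq (q : ℕ) (hq : q.Prime) (sb : Fin 2 → ℤ)
    (hcop : ∀ j, IsCoprime (sb j) (q : ℤ))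
    (hdist : ∀ i j, i ≠ j → ¬ ((q : ℤ) ∣ (sb i - sb j)) ∧ ¬ ((q : ℤ) ∣ (sb i + sb j)))
    (ξ : ℂ) (hprim : IsPrimitiveRoot ξ q) :
    (∑ l ∈ Finset.Icc 1 (q - 1),
        ∏ j, (X - C (ξ ^ (sb j * l))) * (X - C (ξ ^ (-(sb j) * l)))) =
      C ((q : ℂ) - 1) * X ^ 4 + C 4 * X ^ 3 + C (2 * (q : ℂ) - 6) * X ^ 2
        + C 4 * X + C ((q : ℂ) - 1) := by
  have hq1 : 1 < q := hq.one_lt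
  have hξ0 : ξ ≠ 0 := hprim.ne_zero (by omega)
  have hndvd : ∀ j, ¬ (q : ℤ) ∣ sb j := by
    intro j h
    have := Int.isUnit_iff.mp ((hcop j).isUnit_of_dvd' h dvd_rfl)
    omega
  have hd1 : ¬ (q : ℤ) ∣ (sb 0 - sb 1) := (hdist 0 1 (by decide)).1
  have hd2 : ¬ (q : ℤ) ∣ (sb 0 + sb 1) := (hdist 0 1 (by decide)).2
  have hd1' : ¬ (q : ℤ) ∣ (sb 1 - sb 0) := by
    rw [show sb 1 - sb 0 = -(sb 0 - sb 1) by ring, dvd_neg]; exact hd1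
  have hd2' : ¬ (q : ℤ) ∣ (-(sb 0) - sb 1) := by
    rw [show -(sb 0) - sb 1 = -(sb 0 + sb 1) by ring, dvd_neg]; exact hd2
  have hn0 : ¬ (q : ℤ) ∣ -(sb 0) := by rw [dvd_neg]; exact hndvd 0
  have hn1 : ¬ (q : ℤ) ∣ -(sb 1) := by rw [dvd_neg]; exact hndvd 1
  -- abbreviations
  set S := Finset.Icc 1 (q - 1) with hS
  have Z : ∀ k : ℤ, ¬ (q : ℤ) ∣ k → ∑ l ∈ S, ξ ^ (k * l) = -1 :=
    fun k hk => sum_zpow_eq_neg_one hq1 hprim hk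
  have hcard : (S.card : ℂ) = (q : ℂ) - 1 := by
    rw [hS, Nat.card_Icc]
    have : q - 1 + 1 - 1 = q - 1 := by omega
    rw [this, Nat.cast_sub (by omega), Nat.cast_one]
  -- the four coefficient sums
  have hA : ∑ l ∈ S, (ξ ^ (sb 0 * l) + ξ ^ (-(sb 0) * l) + ξ ^ (sb 1 * l)
      + ξ ^ (-(sb 1) * l)) = -4 := by
    simp only [Finset.sum_add_distrib]
    rw [Z _ (hndvd 0), Z _ hn0, Z _ (hndvd 1), Z _ hn1]; norm_num
  have hE : ∑ l ∈ S, ξ ^ (sb 0 * l) * ξ ^ (-(sb 0) * l) * ξ ^ (sb 1 * l)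
      * ξ ^ (-(sb 1) * l) = (q : ℂ) - 1 := by
    rw [Finset.sum_congr rfl (g := fun _ => (1 : ℂ)) (fun l _ => ?_), Finset.sum_const,
      nsmul_eq_mul, mul_one, hcard]
    rw [← zpow_add₀ hξ0, ← zpow_add₀ hξ0, ← zpow_add₀ hξ0,
      show sb 0 * (l : ℤ) + -(sb 0) * l + sb 1 * l + -(sb 1) * l = 0 by ring, zpow_zero]
  have hB : ∑ l ∈ S, (ξ ^ (sb 0 * l) * ξ ^ (-(sb 0) * l)
      + ξ ^ (sb 0 * l) * ξ ^ (sb 1 * l) + ξ ^ (sb 0 * l) * ξ ^ (-(sb 1) * l)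
      + ξ ^ (-(sb 0) * l) * ξ ^ (sb 1 * l) + ξ ^ (-(sb 0) * l) * ξ ^ (-(sb 1) * l)
      + ξ ^ (sb 1 * l) * ξ ^ (-(sb 1) * l)) = 2 * (q : ℂ) - 6 := by
    rw [Finset.sum_congr rfl (g := fun l : ℕ => (1 : ℂ) + ξ ^ ((sb 0 + sb 1) * l)
      + ξ ^ ((sb 0 - sb 1) * l) + ξ ^ ((sb 1 - sb 0) * l) + ξ ^ ((-(sb 0) - sb 1) * l) + 1)
      (fun l _ => ?_)]
    · simp only [Finset.sum_add_distrib, Finset.sum_const, nsmul_eq_mul, mul_one]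
      rw [Z _ hd2, Z _ hd1, Z _ hd1', Z _ hd2', hcard]; ring
    · simp only [← zpow_add₀ hξ0]
      congr 5 <;> first
        | · norm_num
        | · rw [show sb 0 * (l : ℤ) + -(sb 0) * l = 0 by ring, zpow_zero]
        | · rw [show sb 1 * (l : ℤ) + -(sb 1) * l = 0 by ring, zpow_zero]
        | · congr 1; ring
  have hD : ∑ l ∈ S, (ξ ^ (sb 0 * l) * ξ ^ (-(sb 0) * l) * ξ ^ (sb 1 * l)
      + ξ ^ (sb 0 * l) * ξ ^ (-(sb 0) * l) * ξ ^ (-(sb 1) * l)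
      + ξ ^ (sb 0 * l) * ξ ^ (sb 1 * l) * ξ ^ (-(sb 1) * l)
      + ξ ^ (-(sb 0) * l) * ξ ^ (sb 1 * l) * ξ ^ (-(sb 1) * l)) = -4 := by
    rw [Finset.sum_congr rfl (g := fun l : ℕ => ξ ^ (sb 1 * (l : ℤ)) + ξ ^ (-(sb 1) * (l : ℤ))
      + ξ ^ (sb 0 * (l : ℤ)) + ξ ^ (-(sb 0) * (l : ℤ))) (fun l _ => ?_)]
    · simp only [Finset.sum_add_distrib]
      rw [Z _ (hndvd 1), Z _ hn1, Z _ (hndvd 0), Z _ hn0]; norm_num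
    · simp only [← zpow_add₀ hξ0]
      congr 3 <;> · congr 1; ring
  -- expansion of each summand
  have expand : ∀ a a' b b' : ℂ,
      (X - C a) * (X - C a') * ((X - C b) * (X - C b')) =
        X ^ 4 + C (-(a + a' + b + b')) * X ^ 3
          + C (a * a' + a * b + a * b' + a' * b + a' * b' + b * b') * X ^ 2
          + C (-(a * a' * b + a * a' * b' + a * b * b' + a' * b * b')) * X
          + C (a * a' * b * b') := by
    intro a a' b b'
    simp only [C_add, C_mul, C_neg]; ring
  calc (∑ l ∈ S, ∏ j, (X - C (ξ ^ (sb j * l))) * (X - C (ξ ^ (-(sb j) * l))))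
      = ∑ l ∈ S, (X ^ 4
          + C (-(ξ ^ (sb 0 * (l : ℤ)) + ξ ^ (-(sb 0) * (l : ℤ)) + ξ ^ (sb 1 * (l : ℤ))
              + ξ ^ (-(sb 1) * (l : ℤ)))) * X ^ 3
          + C (ξ ^ (sb 0 * (l : ℤ)) * ξ ^ (-(sb 0) * (l : ℤ))
              + ξ ^ (sb 0 * (l : ℤ)) * ξ ^ (sb 1 * (l : ℤ))
              + ξ ^ (sb 0 * (l : ℤ)) * ξ ^ (-(sb 1) * (l : ℤ))
              + ξ ^ (-(sb 0) * (l : ℤ)) * ξ ^ (sb 1 * (l : ℤ))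
              + ξ ^ (-(sb 0) * (l : ℤ)) * ξ ^ (-(sb 1) * (l : ℤ))
              + ξ ^ (sb 1 * (l : ℤ)) * ξ ^ (-(sb 1) * (l : ℤ))) * X ^ 2
          + C (-(ξ ^ (sb 0 * (l : ℤ)) * ξ ^ (-(sb 0) * (l : ℤ)) * ξ ^ (sb 1 * (l : ℤ))
              + ξ ^ (sb 0 * (l : ℤ)) * ξ ^ (-(sb 0) * (l : ℤ)) * ξ ^ (-(sb 1) * (l : ℤ))
              + ξ ^ (sb 0 * (l : ℤ)) * ξ ^ (sb 1 * (l : ℤ)) * ξ ^ (-(sb 1) * (l : ℤ))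
              + ξ ^ (-(sb 0) * (l : ℤ)) * ξ ^ (sb 1 * (l : ℤ)) * ξ ^ (-(sb 1) * (l : ℤ)))) * X
          + C (ξ ^ (sb 0 * (l : ℤ)) * ξ ^ (-(sb 0) * (l : ℤ)) * ξ ^ (sb 1 * (l : ℤ))
              * ξ ^ (-(sb 1) * (l : ℤ)))) := by
        refine Finset.sum_congr rfl fun l _ => ?_
        rw [Fin.prod_univ_two]; exact expand _ _ _ _
    _ = C ((q : ℂ) - 1) * X ^ 4 + C 4 * X ^ 3 + C (2 * (q : ℂ) - 6) * X ^ 2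
        + C 4 * X + C ((q : ℂ) - 1) := by
        simp only [Finset.sum_add_distrib, Finset.sum_const, ← Finset.sum_mul, ← map_sum,
          Finset.sum_neg_distrib]
        simp only [Finset.sum_add_distrib] at hA hB hD
        rw [hA, hB, hD, hE]
        have hc4 : S.card • (X ^ 4 : ℂ[X]) = C ((q : ℂ) - 1) * X ^ 4 := by
          rw [nsmul_eq_mul, ← hcard]; simp
        rw [hc4]; norm_num

/-- Let `q` be an odd prime with `q − 1 = 2m + 4` (so `h = 2`) and `ξ = e^{2πi/q}`.
The degree-4 polynomial `Ψ_Γ(z) = Σ_{l=1}^{q−1} ∏_{j=1}^{2} (z − ξ^{s̄ⱼl})(z − ξ^{−s̄ⱼl})`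
is independent of the choice of the admissible pair `(s̄₁, s̄₂)`: its coefficients are
determined by `q` alone. -/
theorem psi_independent_of_pair (q m : ℕ) (hq : q.Prime) (hodd : Odd q)
    (hm : q = 2 * m + 5)
    (sb sb' : Fin 2 → ℤ)
    (hcop : ∀ j, IsCoprime (sb j) (q : ℤ)) (hcop' : ∀ j, IsCoprime (sb' j) (q : ℤ))
    (hdist : ∀ i j, i ≠ j → ¬ ((q : ℤ) ∣ (sb i - sb j)) ∧ ¬ ((q : ℤ) ∣ (sb i + sb j)))
    (hdist' : ∀ i j, i ≠ j → ¬ ((q : ℤ) ∣ (sb' i - sb' j)) ∧ ¬ ((q : ℤ) ∣ (sb' i + sb' j)))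
    (ξ : ℂ) (hξ : ξ = Complex.exp (2 * Real.pi * Complex.I / q)) :
    (∑ l ∈ Finset.Icc 1 (q - 1),
        ∏ j, (X - C (ξ ^ (sb j * l))) * (X - C (ξ ^ (-(sb j) * l)))) =
      ∑ l ∈ Finset.Icc 1 (q - 1),
        ∏ j, (X - C (ξ ^ (sb' j * l))) * (X - C (ξ ^ (-(sb' j) * l))) := by
  have hprim : IsPrimitiveRoot ξ q := by
    rw [hξ]
    exact Complex.isPrimitiveRoot_exp q hq.ne_zero
  rw [psi_sum_eq q hq sb hcop hdist ξ hprim, psi_sum_eq q hq sb' hcop' hdist' ξ hprim]
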